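/- Let s, t ≥ 1 be integers, G a group, σ_1, …, σ_s : G → ℝ_{>0} group homomorphisms into the positive reals, and σ_{s+1}, …, σ_{s+t} : G → ℂ∖{0} group homomorphisms into the nonzero complex numbers; define σ_{s+t+j}(u) = conj(σ_{s+j}(u)) for 1 ≤ j ≤ t. Assume: (i) the functions u ↦ log σ_1(u), …, u ↦ log σ_s(u) are linearly independent over ℝ in the vector space of real-valued functions on G; (ii) for all u ∈ G and all 1 ≤ j ≤ t one has |σ_{s+j}(u)|^2 = (σ_1(u)·…·σ_s(u))^{−1/t}; (iii) the s+2t homomorphisms σ_1, …, σ_{s+2t} are pairwise distinct as functions on G. Then for a subset I ⊆ {1, …, s+2t}, one has (σ_1(u)·…·σ_s(u))^{1/t}·∏_{i∈I} σ_i(u) = 1 for all u ∈ G if and only if I = {s+j, s+t+j} for some 1 ≤ j ≤ t. -/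

import Mathlib

private lemma sumIccFin (s : ℕ) (f : ℕ → ℝ) :
    ∑ k ∈ Finset.Icc 1 s, f k = ∑ i : Fin s, f (i.1 + 1) := by
  rw [← Finset.Ico_add_one_right_eq_Icc, Finset.sum_Ico_eq_sum_range,
    ← Fin.sum_univ_eq_sum_range (fun i => f (1 + i))]
  simp [add_comm]

/-- Let `s, t ≥ 1`, `G` a group, and `σ₁, …, σ_{s+2t} : G → ℂ` (indexed here by
`i ∈ {1, …, s+2t}`) be group homomorphisms such that `σ₁, …, σ_s` take positive real
values, `σ_{s+1}, …, σ_{s+t}` take nonzero values, and `σ_{s+t+j} = conj ∘ σ_{s+j}` for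
`1 ≤ j ≤ t`. Assume (i) the functions `u ↦ log σᵢ(u)`, `1 ≤ i ≤ s`, are linearly
independent over `ℝ`, (ii) for all `u ∈ G` and `1 ≤ j ≤ t`,
`|σ_{s+j}(u)|² = (σ₁(u)⋯σ_s(u))^(−1/t)`, and (iii) the `s+2t` homomorphisms are pairwise
distinct as functions on `G`. Then for `I ⊆ {1, …, s+2t}`, one has
`(σ₁(u)⋯σ_s(u))^(1/t)·∏_{i∈I} σᵢ(u) = 1` for all `u ∈ G` if and only if
`I = {s+j, s+t+j}` for some `1 ≤ j ≤ t`. -/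
theorem stmt6 (s t : ℕ) (hs : 1 ≤ s) (ht : 1 ≤ t)
    (G : Type*) [Group G] (σ : ℕ → G → ℂ)
    (hone : ∀ i ∈ Finset.Icc 1 (s + 2 * t), σ i 1 = 1)
    (hhom : ∀ i ∈ Finset.Icc 1 (s + 2 * t), ∀ u v : G, σ i (u * v) = σ i u * σ i v)
    (hreal : ∀ i ∈ Finset.Icc 1 s, ∀ u : G, ∃ r : ℝ, 0 < r ∧ σ i u = (r : ℂ))
    (hnz : ∀ j ∈ Finset.Icc 1 t, ∀ u : G, σ (s + j) u ≠ 0)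
    (hconj : ∀ j ∈ Finset.Icc 1 t, ∀ u : G,
      σ (s + t + j) u = starRingEnd ℂ (σ (s + j) u))
    (hind : LinearIndependent ℝ
      (fun i : Fin s => (fun u : G => Real.log (σ (i.1 + 1) u).re : G → ℝ)))
    (hlck : ∀ u : G, ∀ j ∈ Finset.Icc 1 t,
      ‖σ (s + j) u‖ ^ 2
        = (∏ k ∈ Finset.Icc 1 s, (σ k u).re) ^ (-(1 : ℝ) / (t : ℝ)))
    (hdist : ∀ i ∈ Finset.Icc 1 (s + 2 * t), ∀ j ∈ Finset.Icc 1 (s + 2 * t),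
      i ≠ j → σ i ≠ σ j)
    (I : Finset ℕ) (hI : I ⊆ Finset.Icc 1 (s + 2 * t)) :
    (∀ u : G, ((((∏ k ∈ Finset.Icc 1 s, (σ k u).re) ^ ((1 : ℝ) / (t : ℝ)) : ℝ) : ℂ)
        * ∏ i ∈ I, σ i u = 1))
      ↔ ∃ j ∈ Finset.Icc 1 t, I = {s + j, s + t + j} := by
  classical
  set P : G → ℝ := fun u => ∏ k ∈ Finset.Icc 1 s, (σ k u).re with hPdef
  have hre : ∀ k ∈ Finset.Icc 1 s, ∀ u : G, 0 < (σ k u).re ∧ σ k u = ((σ k u).re : ℂ) := by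
    intro k hk u
    obtain ⟨r, hr, hrr⟩ := hreal k hk u
    rw [hrr]
    simpa using hr
  have hPpos : ∀ u, 0 < P u := fun u => Finset.prod_pos (fun k hk => (hre k hk u).1)
  have habs2 : ∀ i, s + 1 ≤ i → i ≤ s + 2 * t → ∀ u : G,
      ‖σ i u‖ ^ 2 = (P u) ^ (-(1 : ℝ) / (t : ℝ)) := by
    intro i h1 h2 u
    by_cases hc : i ≤ s + t
    · have hj : i - s ∈ Finset.Icc 1 t := by simp only [Finset.mem_Icc]; omega
      have heq : s + (i - s) = i := by omega
      have := hlck u (i - s) hj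
      rwa [heq] at this
    · have hj : i - s - t ∈ Finset.Icc 1 t := by simp only [Finset.mem_Icc]; omega
      have heq : s + t + (i - s - t) = i := by omega
      have hc2 := hconj (i - s - t) hj u
      rw [heq] at hc2
      rw [hc2, Complex.norm_conj]
      exact hlck u (i - s - t) hj
  have hnz' : ∀ i, s + 1 ≤ i → i ≤ s + 2 * t → ∀ u : G, σ i u ≠ 0 := by
    intro i h1 h2 u
    by_cases hc : i ≤ s + t
    · have hj : i - s ∈ Finset.Icc 1 t := by simp only [Finset.mem_Icc]; omega
      have heq : s + (i - s) = i := by omega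
      rw [← heq]; exact hnz _ hj u
    · have hj : i - s - t ∈ Finset.Icc 1 t := by simp only [Finset.mem_Icc]; omega
      have heq : s + t + (i - s - t) = i := by omega
      rw [← heq, hconj _ hj u]
      simpa using hnz _ hj u
  have htR : (t : ℝ) ≠ 0 := by positivity
  constructor
  · -- forward direction
    intro h
    set A : Finset ℕ := I.filter (fun i => i ≤ s) with hAdef
    set B : Finset ℕ := I.filter (fun i => ¬ i ≤ s) with hBdef
    have hAsub : A ⊆ Finset.Icc 1 s := by
      intro i hi
      have h1 := hI (Finset.mem_filter.mp hi).1
      have h2 := (Finset.mem_filter.mp hi).2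
      simp only [Finset.mem_Icc] at h1 ⊢
      omega
    have hBsub : ∀ i ∈ B, s + 1 ≤ i ∧ i ≤ s + 2 * t := by
      intro i hi
      have h1 := hI (Finset.mem_filter.mp hi).1
      have h2 := (Finset.mem_filter.mp hi).2
      simp only [Finset.mem_Icc] at h1
      omega
    set m := B.card with hmdef
    have hmle : m ≤ 2 * t := by
      have hsub : B ⊆ Finset.Icc (s + 1) (s + 2 * t) := by
        intro i hi
        simp only [Finset.mem_Icc]
        exact hBsub i hi
      calc m ≤ (Finset.Icc (s + 1) (s + 2 * t)).card := Finset.card_le_card hsub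
        _ = 2 * t := by rw [Nat.card_Icc]; omega
    -- the log-modulus equation
    have key : ∀ u : G, ∑ k ∈ Finset.Icc 1 s,
        ((2 : ℝ) / t - m / t + (if k ∈ A then 2 else 0)) * Real.log (σ k u).re = 0 := by
      intro u
      have h1 := congrArg (‖·‖) (h u)
      rw [norm_mul, norm_prod, norm_one, Complex.norm_real, Real.norm_eq_abs,
        abs_of_pos (Real.rpow_pos_of_pos (hPpos u) _)] at h1
      have h2 : ((P u) ^ ((1 : ℝ) / t)) ^ 2 * ∏ i ∈ I, ‖σ i u‖ ^ 2 = 1 := by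
        rw [Finset.prod_pow, ← mul_pow, h1, one_pow]
      have h3 : (∏ i ∈ I, ‖σ i u‖ ^ 2)
          = (∏ i ∈ A, ((σ i u).re) ^ 2) * ((P u) ^ (-(1 : ℝ) / (t : ℝ))) ^ m := by
        rw [← Finset.prod_filter_mul_prod_filter_not I (fun i => i ≤ s)
          (fun i => ‖σ i u‖ ^ 2)]
        congr 1
        · apply Finset.prod_congr rfl
          intro i hi
          have hi' := hAsub hi
          rw [(hre i hi' u).2, Complex.norm_real, Real.norm_eq_abs, abs_of_pos (hre i hi' u).1]
          simp
        · rw [Finset.prod_congr rfl (fun i hi => habs2 i (hBsub i hi).1 (hBsub i hi).2 u),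
            Finset.prod_const]
      rw [h3] at h2
      have e2 := congrArg Real.log h2
      have hrk : ∀ k ∈ Finset.Icc 1 s, (σ k u).re ≠ 0 := fun k hk => (hre k hk u).1.ne'
      have hApos : ∀ i ∈ A, ((σ i u).re) ^ 2 ≠ 0 := fun i hi =>
        pow_ne_zero 2 ((hre i (hAsub hi) u).1.ne')
      have hx1 : ((P u) ^ ((1 : ℝ) / t)) ^ 2 ≠ 0 :=
        pow_ne_zero 2 (Real.rpow_pos_of_pos (hPpos u) _).ne'
      have hx2 : (∏ i ∈ A, ((σ i u).re) ^ 2) ≠ 0 := Finset.prod_ne_zero_iff.mpr hApos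
      have hx3 : ((P u) ^ (-(1 : ℝ) / (t : ℝ))) ^ m ≠ 0 :=
        pow_ne_zero m (Real.rpow_pos_of_pos (hPpos u) _).ne'
      rw [Real.log_one, Real.log_mul hx1 (mul_ne_zero hx2 hx3), Real.log_mul hx2 hx3,
        Real.log_pow, Real.log_pow, Real.log_rpow (hPpos u), Real.log_rpow (hPpos u),
        Real.log_prod hApos] at e2
      have hL : Real.log (P u) = ∑ k ∈ Finset.Icc 1 s, Real.log (σ k u).re :=
        Real.log_prod hrk
      simp only [Real.log_pow] at e2
      push_cast at e2
      rw [hL] at e2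
      have expand : ∑ k ∈ Finset.Icc 1 s,
          ((2 : ℝ) / t - m / t + (if k ∈ A then 2 else 0)) * Real.log (σ k u).re
          = ((2 : ℝ) / t - m / t) * ∑ k ∈ Finset.Icc 1 s, Real.log (σ k u).re
            + ∑ k ∈ A, 2 * Real.log (σ k u).re := by
        have hint : Finset.Icc 1 s ∩ A = A := Finset.inter_eq_right.mpr hAsub
        have h4 : ∑ k ∈ Finset.Icc 1 s, (if k ∈ A then 2 * Real.log (σ k u).re else 0)
            = ∑ k ∈ A, 2 * Real.log (σ k u).re := by
          rw [Finset.sum_ite_mem, hint]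
        rw [Finset.mul_sum, ← h4, ← Finset.sum_add_distrib]
        apply Finset.sum_congr rfl
        intro k hk
        by_cases hkA : k ∈ A
        · rw [if_pos hkA, if_pos hkA]; ring
        · rw [if_neg hkA, if_neg hkA]; ring
      rw [expand]
      have hsumA : ∑ k ∈ A, 2 * Real.log (σ k u).re
          = 2 * ∑ k ∈ A, Real.log (σ k u).re := by rw [Finset.mul_sum]
      rw [hsumA]
      rw [← Finset.mul_sum] at e2
      linear_combination e2
    -- coefficients vanish
    have hcoef : ∀ k ∈ Finset.Icc 1 s,
        ((2 : ℝ) / t - m / t + (if k ∈ A then 2 else 0)) = 0 := by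
      have hz : ∑ i : Fin s,
          ((2 : ℝ) / t - m / t + (if i.1 + 1 ∈ A then 2 else 0)) •
            (fun u : G => Real.log (σ (i.1 + 1) u).re) = 0 := by
        funext u
        have := key u
        rw [sumIccFin s (fun k => ((2 : ℝ) / t - m / t + (if k ∈ A then 2 else 0))
          * Real.log (σ k u).re)] at this
        simpa [Finset.sum_apply] using this
      have hli := Fintype.linearIndependent_iff.mp hind
        (fun i : Fin s => ((2 : ℝ) / t - m / t + (if i.1 + 1 ∈ A then 2 else 0))) hz
      intro k hk
      simp only [Finset.mem_Icc] at hk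
      have := hli ⟨k - 1, by omega⟩
      simpa [Nat.sub_add_cancel hk.1] using this
    -- deduce A = ∅ and m = 2
    have h1s : (1 : ℕ) ∈ Finset.Icc 1 s := by simp [Finset.mem_Icc]; omega
    have hAempty : A = ∅ := by
      by_contra hne
      obtain ⟨a, ha⟩ := Finset.nonempty_of_ne_empty hne
      have hc := hcoef a (hAsub ha)
      rw [if_pos ha] at hc
      field_simp at hc
      have : (m : ℝ) = 2 * t + 2 := by linarith
      have hm' : m = 2 * t + 2 := by exact_mod_cast this
      omega
    have hm2 : m = 2 := by
      have hc := hcoef 1 h1s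
      rw [hAempty] at hc
      simp only [Finset.notMem_empty, if_false, add_zero] at hc
      field_simp at hc
      have : (m : ℝ) = 2 := by linarith
      exact_mod_cast this
    have hIB : I = B := by
      have := Finset.filter_union_filter_not_eq (fun i => i ≤ s) I
      rw [← hAdef, ← hBdef] at this  -- A ∪ B = I
      rw [← this, hAempty, Finset.empty_union]
    have hIcard : I.card = 2 := by rw [hIB]; exact hm2
    obtain ⟨a, b, hab, habI⟩ := Finset.card_eq_two.mp hIcard
    have haB : s + 1 ≤ a ∧ a ≤ s + 2 * t := by
      apply hBsub; rw [← hIB, habI]; simp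
    have hbB : s + 1 ≤ b ∧ b ≤ s + 2 * t := by
      apply hBsub; rw [← hIB, habI]; simp
    -- the key pointwise identity : σ a = conj ∘ σ b
    have hclaim : ∀ u : G, σ a u = starRingEnd ℂ (σ b u) := by
      intro u
      have h0 := h u
      rw [habI, Finset.prod_pair hab] at h0
      have hb2 : σ b u * starRingEnd ℂ (σ b u) = (((P u) ^ (-(1 : ℝ) / (t : ℝ)) : ℝ) : ℂ) := by
        rw [Complex.mul_conj]
        congr 1
        rw [← Complex.sq_norm]
        exact habs2 b hbB.1 hbB.2 u
      have key2 : (((P u) ^ ((1 : ℝ) / (t : ℝ)) : ℝ) : ℂ) * (σ a u * σ b u)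
          = (((P u) ^ ((1 : ℝ) / (t : ℝ)) : ℝ) : ℂ) * (starRingEnd ℂ (σ b u) * σ b u) := by
        rw [h0, mul_comm (starRingEnd ℂ (σ b u)), hb2, ← Complex.ofReal_mul,
          ← Real.rpow_add (hPpos u)]
        rw [show (1 : ℝ) / (t : ℝ) + -(1 : ℝ) / (t : ℝ) = 0 by ring, Real.rpow_zero,
          Complex.ofReal_one]
      have hP0 : (((P u) ^ ((1 : ℝ) / (t : ℝ)) : ℝ) : ℂ) ≠ 0 := by
        simpa using (Real.rpow_pos_of_pos (hPpos u) ((1 : ℝ) / (t : ℝ))).ne'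
      have hbne := hnz' b hbB.1 hbB.2 u
      have := mul_left_cancel₀ hP0 key2
      exact mul_right_cancel₀ hbne this
    have haIcc : a ∈ Finset.Icc 1 (s + 2 * t) := by simp [Finset.mem_Icc]; omega
    by_cases hc : b ≤ s + t
    · -- b = s + j, so a must be s + t + j
      set j := b - s with hjdef
      have hjt : j ∈ Finset.Icc 1 t := by simp only [Finset.mem_Icc]; omega
      have hbj : s + j = b := by omega
      have hfun : σ a = σ (s + t + j) := by
        funext u
        rw [hclaim u, hconj j hjt u, hbj]
      have hstj : s + t + j ∈ Finset.Icc 1 (s + 2 * t) := by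
        simp only [Finset.mem_Icc] at hjt ⊢; omega
      have ha : a = s + t + j := by
        by_contra hne
        exact hdist a haIcc (s + t + j) hstj hne hfun
      refine ⟨j, hjt, ?_⟩
      rw [habI, ha, ← hbj, Finset.pair_comm]
    · -- b = s + t + j, so a must be s + j
      set j := b - s - t with hjdef
      have hjt : j ∈ Finset.Icc 1 t := by simp only [Finset.mem_Icc]; omega
      have hbj : s + t + j = b := by omega
      have hfun : σ a = σ (s + j) := by
        funext u
        rw [hclaim u, ← hbj, hconj j hjt u]
        simp
      have hsj : s + j ∈ Finset.Icc 1 (s + 2 * t) := by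
        simp only [Finset.mem_Icc] at hjt ⊢; omega
      have ha : a = s + j := by
        by_contra hne
        exact hdist a haIcc (s + j) hsj hne hfun
      exact ⟨j, hjt, by rw [habI, ha, hbj]⟩
  · -- reverse direction
    rintro ⟨j, hj, rfl⟩
    intro u
    have hj' : 1 ≤ j ∧ j ≤ t := by simpa [Finset.mem_Icc] using hj
    have hne : s + j ≠ s + t + j := by omega
    rw [Finset.prod_pair hne, hconj j hj u, Complex.mul_conj]
    have hnsq : (Complex.normSq (σ (s + j) u) : ℝ) = (P u) ^ (-(1 : ℝ) / (t : ℝ)) := by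
      rw [← Complex.sq_norm]; exact hlck u j hj
    rw [hnsq, ← Complex.ofReal_mul, ← Real.rpow_add (hPpos u)]
    rw [show (1 : ℝ) / (t : ℝ) + -(1 : ℝ) / (t : ℝ) = 0 by ring, Real.rpow_zero,
      Complex.ofReal_one]
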